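/- For n ≥ 1, the image of the Lie ball L_{2n} under the map R(z₁,…,z_{2n}) = ((z₁ - i z₂)/2, (z₂+i z₁)/2, …, (z_{2n-1} - i z_{2n})/2, (z_{2n}+i z_{2n-1})/2) equals the set M = {(w₁, i w₁, w₂, i w₂, …, w_n, i w_n) : (w₁,…,w_n) ∈ ℂⁿ, 2(|w₁|² + ⋯ + |w_n|²) < 1/2 ⋅ 1}, which is linearly isomorphic to a Euclidean ball of dimension n. -/

import Mathlib

noncomputable def lieBall (m : ℕ) : Set (EuclideanSpace ℂ (Fin m)) :=
  {z | ‖z‖ < 1 ∧ 2 * ‖z‖ ^ 2 - ‖∑ j, z j ^ 2‖ ^ 2 < 1}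

noncomputable def lieRetr (n : ℕ) :
    EuclideanSpace ℂ (Fin (2 * n)) → EuclideanSpace ℂ (Fin (2 * n)) :=
  fun z => WithLp.toLp 2 fun j =>
    if h : j.val % 2 = 0 then
      (z j - Complex.I * z ⟨j.val + 1, by have := j.isLt; omega⟩) / 2
    else
      (z j + Complex.I * z ⟨j.val - 1, by have := j.isLt; omega⟩) / 2

lemma pair_sum {M : Type*} [AddCommMonoid M] (n : ℕ) (f : Fin (2*n) → M) :
    ∑ j, f j = ∑ k : Fin n, (f ⟨2*k.val, by omega⟩ +
      f ⟨2*k.val+1, by omega⟩) := by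
  rw [← Equiv.sum_comp ((finProdFinEquiv : Fin n × Fin 2 ≃ Fin (n*2)).trans
      (finCongr (Nat.mul_comm n 2))) f, Fintype.sum_prod_type]
  refine Finset.sum_congr rfl fun k _ => ?_
  rw [Fin.sum_univ_two]
  congr 1 <;> · congr 1; ext; simp [finProdFinEquiv]; all_goals omega

noncomputable def Tmap (n : ℕ) :
    EuclideanSpace ℂ (Fin n) →ₗ[ℂ] EuclideanSpace ℂ (Fin (2*n)) where
  toFun w := WithLp.toLp 2 fun (j : Fin (2*n)) => (if j.val % 2 = 0 then 1 else Complex.I) *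
      w ⟨j.val / 2, by have := j.isLt; omega⟩
  map_add' u v := by ext j; simp [mul_add]
  map_smul' c u := by ext j; simp; ring

lemma Tmap_apply (n : ℕ) (w : EuclideanSpace ℂ (Fin n)) (j : Fin (2*n)) :
    Tmap n w j = (if j.val % 2 = 0 then 1 else Complex.I) *
      w ⟨j.val / 2, by have := j.isLt; omega⟩ := rfl

lemma Tmap_even' (n : ℕ) (w : EuclideanSpace ℂ (Fin n)) (j : Fin (2*n)) (k : Fin n)
    (hjk : j.val = 2 * k.val) : Tmap n w j = w k := by
  rw [Tmap_apply, if_pos (by omega : j.val % 2 = 0), one_mul]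
  exact congrArg w (Fin.ext (by simp [hjk]))

lemma Tmap_odd' (n : ℕ) (w : EuclideanSpace ℂ (Fin n)) (j : Fin (2*n)) (k : Fin n)
    (hjk : j.val = 2 * k.val + 1) : Tmap n w j = Complex.I * w k := by
  rw [Tmap_apply, if_neg (by omega : ¬ j.val % 2 = 0)]
  exact congrArg (Complex.I * w ·) (Fin.ext (by simp [hjk]; omega))

lemma Tmap_even (n : ℕ) (w : EuclideanSpace ℂ (Fin n)) (k : Fin n) :
    Tmap n w ⟨2*k.val, by omega⟩ = w k :=
  Tmap_even' n w _ k rfl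

lemma Tmap_odd (n : ℕ) (w : EuclideanSpace ℂ (Fin n)) (k : Fin n) :
    Tmap n w ⟨2*k.val+1, by omega⟩ = Complex.I * w k :=
  Tmap_odd' n w _ k rfl

lemma Tmap_inj (n : ℕ) : Function.Injective (Tmap n) := by
  intro u v huv
  ext k
  have h1 := Tmap_even n u k
  have h2 := Tmap_even n v k
  rw [huv] at h1
  rw [← h1, h2]

lemma norm_sq_eq {m : ℕ} (z : EuclideanSpace ℂ (Fin m)) :
    ‖z‖^2 = ∑ j, ‖z j‖ ^ 2 := by
  rw [EuclideanSpace.norm_eq, Real.sq_sqrt (by positivity)]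

lemma retr_fix (n : ℕ) (w : EuclideanSpace ℂ (Fin n)) :
    lieRetr n (Tmap n w) = Tmap n w := by
  ext j
  unfold lieRetr
  rw [PiLp.toLp_apply]
  by_cases h : j.val % 2 = 0
  · obtain ⟨k, hk2⟩ : ∃ k : Fin n, j.val = 2 * k.val :=
      ⟨⟨j.val/2, by have := j.isLt; omega⟩, by simp; omega⟩
    rw [dif_pos h, Tmap_even' n w j k hk2,
      Tmap_odd' n w ⟨j.val+1, by have := j.isLt; omega⟩ k (by simp [hk2])]
    linear_combination (-(w k)/2) * Complex.I_sq
  · obtain ⟨k, hk2⟩ : ∃ k : Fin n, j.val = 2 * k.val + 1 :=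
      ⟨⟨j.val/2, by have := j.isLt; omega⟩, by simp; omega⟩
    rw [dif_neg h, Tmap_odd' n w j k hk2,
      Tmap_even' n w ⟨j.val-1, by have := j.isLt; omega⟩ k (by simp [hk2])]
    ring

lemma pair_norm (a b : ℂ) : ‖a‖ ^ 2 + ‖b‖ ^ 2 =
    (‖a - Complex.I*b‖ ^ 2 + ‖a + Complex.I*b‖ ^ 2) / 2 := by
  have h := parallelogram_law_with_norm ℂ a (Complex.I*b)
  have habs : ‖Complex.I*b‖ = ‖b‖ := by simp
  rw [habs] at h
  rw [sq, sq, sq, sq]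
  linarith

lemma Tmap_norm_sum (n : ℕ) (w : EuclideanSpace ℂ (Fin n)) :
    ∑ j, ‖Tmap n w j‖ ^ 2 = 2 * ∑ k, ‖w k‖ ^ 2 := by
  rw [pair_sum n (fun j => ‖Tmap n w j‖ ^ 2), Finset.mul_sum]
  refine Finset.sum_congr rfl fun k _ => ?_
  rw [Tmap_even, Tmap_odd, norm_mul, Complex.norm_I, one_mul]
  ring

lemma Tmap_sq_sum (n : ℕ) (w : EuclideanSpace ℂ (Fin n)) :
    ∑ j, (Tmap n w j) ^ 2 = 0 := by
  rw [pair_sum n (fun j => (Tmap n w j) ^ 2)]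
  refine Finset.sum_eq_zero fun k _ => ?_
  rw [Tmap_even, Tmap_odd]
  linear_combination (w k)^2 * Complex.I_sq

theorem stmt6 (n : ℕ) (hn : 1 ≤ n) :
    ∃ T : EuclideanSpace ℂ (Fin n) →ₗ[ℂ] EuclideanSpace ℂ (Fin (2 * n)),
      Function.Injective T ∧
      (∀ (w : EuclideanSpace ℂ (Fin n)) (k : Fin n),
        T w ⟨2 * k.val, by have := k.isLt; omega⟩ = w k ∧
        T w ⟨2 * k.val + 1, by have := k.isLt; omega⟩ = Complex.I * w k) ∧
      lieRetr n '' lieBall (2 * n) =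
        {z | ∃ w : EuclideanSpace ℂ (Fin n),
          2 * (∑ k, ‖w k‖ ^ 2) < 1 / 2 ∧ z = T w} := by
  refine ⟨Tmap n, Tmap_inj n, fun w k => ⟨Tmap_even n w k, Tmap_odd n w k⟩, ?_⟩
  ext z
  constructor
  · rintro ⟨z₀, ⟨hz1, hz2⟩, rfl⟩
    -- define w
    set w : EuclideanSpace ℂ (Fin n) := WithLp.toLp 2 fun (k : Fin n) =>
      (z₀ ⟨2*k.val, by have := k.isLt; omega⟩
        - Complex.I * z₀ ⟨2*k.val+1, by have := k.isLt; omega⟩) / 2 with hwdef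
    set u : Fin n → ℂ := fun k =>
      z₀ ⟨2*k.val, by have := k.isLt; omega⟩
        - Complex.I * z₀ ⟨2*k.val+1, by have := k.isLt; omega⟩ with hudef
    set v : Fin n → ℂ := fun k =>
      z₀ ⟨2*k.val, by have := k.isLt; omega⟩
        + Complex.I * z₀ ⟨2*k.val+1, by have := k.isLt; omega⟩ with hvdef
    set p : ℝ := ∑ k, ‖u k‖ ^ 2 with hpdef
    set q : ℝ := ∑ k, ‖v k‖ ^ 2 with hqdef
    have hp0 : 0 ≤ p := Finset.sum_nonneg fun k _ => by positivity
    have hq0 : 0 ≤ q := Finset.sum_nonneg fun k _ => by positivity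
    -- ‖z₀‖² = (p+q)/2
    have hnorm : ‖z₀‖ ^ 2 = (p + q) / 2 := by
      rw [norm_sq_eq, pair_sum n (fun j => ‖z₀ j‖ ^ 2), hpdef, hqdef,
        ← Finset.sum_add_distrib, Finset.sum_div]
      refine Finset.sum_congr rfl fun k _ => ?_
      rw [hudef, hvdef]
      exact pair_norm _ _
    -- ∑ z₀ j ^ 2 = ∑ u k * v k
    have hsq : ∑ j, (z₀ j) ^ 2 = ∑ k, u k * v k := by
      rw [pair_sum n (fun j => (z₀ j) ^ 2)]
      refine Finset.sum_congr rfl fun k _ => ?_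
      rw [hudef, hvdef]
      linear_combination (z₀ ⟨2*k.val+1, by have := k.isLt; omega⟩)^2 * Complex.I_sq
    -- Cauchy-Schwarz
    have hcs : ‖∑ k, u k * v k‖ ^ 2 ≤ p * q := by
      have h1 : ‖∑ k, u k * v k‖ ≤
          ∑ k, ‖u k‖ * ‖v k‖ := by
        refine le_trans (norm_sum_le _ _) (le_of_eq ?_)
        exact Finset.sum_congr rfl fun k _ => norm_mul _ _
      have h2 := Finset.sum_mul_sq_le_sq_mul_sq Finset.univ
        (fun k => ‖u k‖) (fun k => ‖v k‖)
      calc ‖∑ k, u k * v k‖ ^ 2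
          ≤ (∑ k, ‖u k‖ * ‖v k‖) ^ 2 := by
            apply pow_le_pow_left₀ (by positivity) h1
        _ ≤ p * q := h2
    -- p < 1
    have hplt : p < 1 := by
      rw [hnorm] at hz2
      rw [hsq] at hz2
      have hpq2 : p + q < 2 := by
        have : ‖z₀‖ ^ 2 < 1 := by nlinarith [norm_nonneg z₀]
        rw [hnorm] at this; linarith
      by_contra hc
      push_neg at hc
      have hq1 : q < 1 := by linarith
      nlinarith [mul_nonneg (by linarith : (0:ℝ) ≤ p - 1) (by linarith : (0:ℝ) ≤ 1 - q)]
    refine ⟨w, ?_, ?_⟩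
    · -- 2 * ∑ |w k|² < 1/2
      have : ∑ k, ‖w k‖ ^ 2 = p / 4 := by
        rw [hpdef, Finset.sum_div]
        refine Finset.sum_congr rfl fun k _ => ?_
        rw [hwdef, hudef]
        simp only [PiLp.toLp_apply, norm_div, div_pow]
        norm_num
      rw [this]; linarith
    · -- lieRetr n z₀ = Tmap n w
      ext j
      unfold lieRetr
      rw [PiLp.toLp_apply]
      by_cases h : j.val % 2 = 0
      · obtain ⟨k, hk2⟩ : ∃ k : Fin n, j.val = 2 * k.val :=
          ⟨⟨j.val/2, by have := j.isLt; omega⟩, by simp; omega⟩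
        rw [dif_pos h, Tmap_even' n w j k hk2, hwdef, PiLp.toLp_apply]
        have e1 : z₀ j = z₀ ⟨2*k.val, by have := k.isLt; omega⟩ :=
          congrArg z₀ (Fin.ext hk2)
        have e2 : z₀ ⟨j.val+1, by have := j.isLt; omega⟩
            = z₀ ⟨2*k.val+1, by have := k.isLt; omega⟩ :=
          congrArg z₀ (Fin.ext (by simp [hk2]))
        rw [e1, e2]
      · obtain ⟨k, hk2⟩ : ∃ k : Fin n, j.val = 2 * k.val + 1 :=
          ⟨⟨j.val/2, by have := j.isLt; omega⟩, by simp; omega⟩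
        rw [dif_neg h, Tmap_odd' n w j k hk2, hwdef, PiLp.toLp_apply]
        have e1 : z₀ j = z₀ ⟨2*k.val+1, by have := k.isLt; omega⟩ :=
          congrArg z₀ (Fin.ext hk2)
        have e2 : z₀ ⟨j.val-1, by have := j.isLt; omega⟩
            = z₀ ⟨2*k.val, by have := k.isLt; omega⟩ :=
          congrArg z₀ (Fin.ext (by simp [hk2]))
        rw [e1, e2]
        set a := z₀ ⟨2*k.val, by have := k.isLt; omega⟩
        set b := z₀ ⟨2*k.val+1, by have := k.isLt; omega⟩
        linear_combination (b/2) * Complex.I_sq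
  · rintro ⟨w, hw, rfl⟩
    refine ⟨Tmap n w, ⟨?_, ?_⟩, retr_fix n w⟩
    · have h1 : ‖Tmap n w‖ ^ 2 = 2 * ∑ k, ‖w k‖ ^ 2 := by
        rw [norm_sq_eq]; exact Tmap_norm_sum n w
      nlinarith [norm_nonneg (Tmap n w)]
    · have h2 : (∑ j, (Tmap n w j) ^ 2) = 0 := Tmap_sq_sum n w
      rw [h2]
      have h1 : ‖Tmap n w‖ ^ 2 = 2 * ∑ k, ‖w k‖ ^ 2 := by
        rw [norm_sq_eq]; exact Tmap_norm_sum n w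
      rw [h1]
      simp only [norm_zero]
      nlinarith
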